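/- Fix a probability distribution μ on K, functions V, Q : K → ℝ, constants a, b ∈ ℝ, and t ≥ 0. Then the function h ↦ ∑_x μ(x) (e^{t L_h} Q)(x) is differentiable at h = 0 (in the sense of HasDerivAt) with derivative equal to ∫_0^t ∑_x (μ e^{sL})(x) (L′ (e^{(t−s)L} Q))(x) ds. (Integrated linear response: the expected value of Q at time t under the perturbed dynamics with constant small amplitude h changes, to first order in h, by the time integral of the response function.) -/

import Mathlib

open NormedSpace Matrix

noncomputable def expRatio (u : ℝ) : ℝ := if u = 0 then 1 else (Real.exp u - 1) / u

lemma expRatio_zero : expRatio 0 = 1 := by simp [expRatio]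

lemma mul_expRatio (u : ℝ) : u * expRatio u = Real.exp u - 1 := by
  unfold expRatio
  rcases eq_or_ne u 0 with h | h
  · simp [h]
  · rw [if_neg h]; field_simp

lemma continuous_expRatio : Continuous expRatio := by
  rw [continuous_iff_continuousAt]
  intro u
  rcases eq_or_ne u 0 with rfl | hu
  · have h1 : Filter.Tendsto (slope Real.exp 0) (nhdsWithin 0 {(0:ℝ)}ᶜ) (nhds 1) := by
      have := Real.hasDerivAt_exp 0
      rw [hasDerivAt_iff_tendsto_slope] at this
      simpa using this
    have h2 : Filter.Tendsto expRatio (nhdsWithin 0 {(0:ℝ)}ᶜ) (nhds 1) := by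
      refine h1.congr' ?_
      filter_upwards [self_mem_nhdsWithin] with x hx
      simp only [Set.mem_compl_iff, Set.mem_singleton_iff] at hx
      simp [slope, expRatio, hx, Real.exp_zero, div_eq_inv_mul, mul_comm]
    have : ContinuousAt expRatio 0 := by
      unfold ContinuousAt
      rw [expRatio_zero, ← nhdsNE_sup_pure]
      exact h2.sup (by simpa [expRatio_zero] using tendsto_pure_nhds expRatio 0)
    exact this
  · have : ∀ᶠ v in nhds u, expRatio v = (Real.exp v - 1) / v := by
      filter_upwards [isOpen_ne.mem_nhds hu] with v hv
      simp [expRatio, hv]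
    have hc : ContinuousAt (fun v => (Real.exp v - 1) / v) u :=
      ((Real.continuous_exp.sub continuous_const).continuousAt).div continuousAt_id hu
    exact hc.congr (Filter.EventuallyEq.symm this)

/-- The generator matrix of the Markov jump process with rates `W`:
entry `W x y` at `(x, y)` for `x ≠ y` and `-∑_{y ≠ x} W x y` on the diagonal. -/
noncomputable def genMatrix {K : Type*} [Fintype K] [DecidableEq K] (W : K → K → ℝ) :
    Matrix K K ℝ :=
  Matrix.of fun x y =>
    if x = y then -∑ z ∈ Finset.univ.filter (fun z => z ≠ x), W x z else W x y

/-- The semigroup `e^{tL}` (matrix exponential of `t • L`). -/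
noncomputable def expL {K : Type*} [Fintype K] [DecidableEq K] (W : K → K → ℝ) (t : ℝ) :
    Matrix K K ℝ :=
  NormedSpace.exp (t • genMatrix W)

/-- Action of `e^{tL}` on observables: `(e^{tL} f)(x) = ∑ y, (e^{tL})_{x,y} f y`. -/
noncomputable def actE {K : Type*} [Fintype K] [DecidableEq K] (W : K → K → ℝ) (t : ℝ)
    (f : K → ℝ) : K → ℝ :=
  fun x => ∑ y, expL W t x y * f y

/-- Action of `e^{tL}` on distributions: `(μ e^{tL})(x) = ∑ z, μ z (e^{tL})_{z,x}`. -/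
noncomputable def muE {K : Type*} [Fintype K] [DecidableEq K] (W : K → K → ℝ) (μ : K → ℝ)
    (t : ℝ) : K → ℝ :=
  fun x => ∑ z, μ z * expL W t z x

/-- The backward generator acting on observables. -/
noncomputable def genL {K : Type*} [Fintype K] (W : K → K → ℝ) (f : K → ℝ) : K → ℝ :=
  fun x => ∑ y, W x y * (f y - f x)

/-- The linearized perturbation operator
`(L' f)(x) = ∑ y, W x y * (b V y - a V x) * (f y - f x)`. -/
noncomputable def genL' {K : Type*} [Fintype K] (W : K → K → ℝ) (V : K → ℝ) (a b : ℝ)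
    (f : K → ℝ) : K → ℝ :=
  fun x => ∑ y, W x y * (b * V y - a * V x) * (f y - f x)

/-- The perturbed rates `W_h x y = W x y * exp (h (b V y - a V x))`. -/
noncomputable def pertW {K : Type*} (W : K → K → ℝ) (V : K → ℝ) (a b h : ℝ) :
    K → K → ℝ :=
  fun x y => W x y * Real.exp (h * (b * V y - a * V x))

section Aux

variable {K : Type*} [Fintype K] [DecidableEq K]

lemma genMatrix_row (W' : K → K → ℝ) (f : K → ℝ) (x : K) :
    ∑ y, genMatrix W' x y * f y = ∑ y, W' x y * (f y - f x) := by
  have hfil : Finset.univ.filter (fun z => z ≠ x) = Finset.univ.erase x := by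
    ext z; simp [Finset.mem_erase, and_comm]
  rw [← Finset.add_sum_erase Finset.univ _ (Finset.mem_univ x),
      ← Finset.add_sum_erase Finset.univ (fun y => W' x y * (f y - f x)) (Finset.mem_univ x)]
  have h1 : genMatrix W' x x = -∑ z ∈ Finset.univ.erase x, W' x z := by
    simp [genMatrix, hfil]
  have h2 : ∀ y ∈ Finset.univ.erase x, genMatrix W' x y * f y = W' x y * f y := by
    intro y hy
    have : x ≠ y := fun h => (Finset.mem_erase.1 hy).1 h.symm
    simp [genMatrix, this]
  rw [Finset.sum_congr rfl h2, h1]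
  simp [mul_sub, Finset.sum_sub_distrib, neg_mul, Finset.sum_mul]
  rw [← Finset.sum_mul]; ring

lemma genMatrix_sub (W1 W2 : K → K → ℝ) :
    genMatrix (fun x y => W1 x y - W2 x y) = genMatrix W1 - genMatrix W2 := by
  ext x y
  by_cases h : x = y <;> simp [genMatrix, h, Finset.sum_sub_distrib] <;> ring

lemma genMatrix_smul (c : ℝ) (W' : K → K → ℝ) :
    genMatrix (fun x y => c * W' x y) = c • genMatrix W' := by
  ext x y
  by_cases h : x = y <;> simp [genMatrix, h, Finset.mul_sum]

end Aux

/-- integrated linear response: for a constant small amplitude `h`, the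
map `h ↦ ∑ x, μ x * (e^{t L_h} Q) x` is differentiable at `h = 0`, with derivative the
time integral `∫_0^t ∑ x, (μ e^{sL}) x * (L' (e^{(t-s)L} Q)) x ds` of the response
function. -/
theorem integrated_linear_response
    {K : Type*} [Fintype K] [Nonempty K] [DecidableEq K]
    (W : K → K → ℝ) (hW : ∀ x y : K, x ≠ y → 0 ≤ W x y)
    (μ : K → ℝ) (hμ0 : ∀ x, 0 ≤ μ x) (hμ1 : ∑ x, μ x = 1)
    (V Q : K → ℝ) (a b : ℝ) (t : ℝ) (ht : 0 ≤ t) :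
    HasDerivAt
      (fun h : ℝ => ∑ x, μ x * ∑ y, expL (pertW W V a b h) t x y * Q y)
      (∫ s in (0:ℝ)..t, ∑ x, muE W μ s x * genL' W V a b (actE W (t - s) Q) x) 0 := by
  classical
  letI : SeminormedRing (Matrix K K ℝ) := Matrix.linftyOpSemiNormedRing
  letI : NormedRing (Matrix K K ℝ) := Matrix.linftyOpNormedRing
  letI : NormedAlgebra ℝ (Matrix K K ℝ) := Matrix.linftyOpNormedAlgebra
  have hexpc : Continuous (exp : Matrix K K ℝ → Matrix K K ℝ) :=
    continuous_iff_continuousAt.2 fun x => (exp_analytic (𝕂 := ℝ) x).continuousAt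
  set A : Matrix K K ℝ := genMatrix W with hA
  set C : Matrix K K ℝ := genMatrix (fun x y => W x y * (b * V y - a * V x)) with hC
  set B : ℝ → Matrix K K ℝ := fun h => genMatrix (pertW W V a b h) with hB
  set D : ℝ → Matrix K K ℝ := fun h => genMatrix
    (fun x y => W x y * (b * V y - a * V x) * expRatio (h * (b * V y - a * V x))) with hD
  -- the observation functional
  let l : Matrix K K ℝ →ₗ[ℝ] ℝ :=
    { toFun := fun M => ∑ x, ∑ y, μ x * M x y * Q y
      map_add' := by
        intro M N
        simp [Matrix.add_apply, mul_add, add_mul, Finset.sum_add_distrib]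
      map_smul' := by
        intro c M
        simp [Matrix.smul_apply, Finset.mul_sum, smul_eq_mul]
        congr 1; funext x; congr 1; funext y; ring }
  let L : Matrix K K ℝ →L[ℝ] ℝ := LinearMap.toContinuousLinearMap l
  have hLapp : ∀ M : Matrix K K ℝ, L M = ∑ x, ∑ y, μ x * M x y * Q y := fun M => rfl
  have hB0 : B 0 = A := by
    have : pertW W V a b 0 = W := by funext x y; simp [pertW]
    show genMatrix (pertW W V a b 0) = genMatrix W
    rw [this]
  have hD0 : D 0 = C := by
    have hf : (fun x y => W x y * (b * V y - a * V x) * expRatio ((0:ℝ) * (b * V y - a * V x)))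
        = fun x y => W x y * (b * V y - a * V x) := by
      funext x y; rw [zero_mul, expRatio_zero, mul_one]
    show genMatrix (fun x y => W x y * (b * V y - a * V x)
      * expRatio ((0:ℝ) * (b * V y - a * V x))) = C
    rw [hf]
  have hBD : ∀ h : ℝ, h • D h = B h - A := by
    intro h
    have : (fun x y => h * (W x y * (b * V y - a * V x) *
        expRatio (h * (b * V y - a * V x)))) =
        fun x y => pertW W V a b h x y - W x y := by
      funext x y
      have h2 : h * (W x y * (b * V y - a * V x) * expRatio (h * (b * V y - a * V x)))
          = W x y * (h * (b * V y - a * V x) * expRatio (h * (b * V y - a * V x))) := by ring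
      rw [h2, mul_expRatio]
      simp [pertW, mul_sub]
    rw [← genMatrix_smul h _, this, genMatrix_sub]
  have contB : Continuous B := by
    apply continuous_matrix
    intro x y
    simp only [hB, genMatrix, Matrix.of_apply]
    by_cases hxy : x = y
    · simp only [hxy, if_pos rfl]
      exact (continuous_finset_sum _ fun z _ =>
        (continuous_const.mul (Real.continuous_exp.comp (continuous_id.mul continuous_const)))).neg
    · simp only [if_neg hxy]
      exact continuous_const.mul (Real.continuous_exp.comp (continuous_id.mul continuous_const))
  have contD : Continuous D := by
    apply continuous_matrix
    intro x y
    simp only [hD, genMatrix, Matrix.of_apply]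
    by_cases hxy : x = y
    · simp only [hxy, if_pos rfl]
      exact (continuous_finset_sum _ fun z _ =>
        continuous_const.mul (continuous_expRatio.comp (continuous_id.mul continuous_const))).neg
    · simp only [if_neg hxy]
      exact continuous_const.mul (continuous_expRatio.comp (continuous_id.mul continuous_const))
  let F : ℝ → ℝ → ℝ := fun h s =>
    L (exp (s • (t • B h)) * (t • D h) * exp ((1 - s) • (t • A)))
  let g : ℝ → ℝ := fun h => ∫ s in (0:ℝ)..1, F h s
  have contF : Continuous (Function.uncurry F) := by
    apply L.continuous.comp
    apply Continuous.mul
    · apply Continuous.mul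
      · exact hexpc.comp (continuous_snd.smul
          ((contB.comp continuous_fst).const_smul t))
      · exact (contD.comp continuous_fst).const_smul t
    · exact hexpc.comp ((continuous_const.sub continuous_snd).smul continuous_const)
  have contg : Continuous g :=
    intervalIntegral.continuous_parametric_intervalIntegral_of_continuous' contF 0 1
  -- Duhamel identity at the level of L
  have key : ∀ h : ℝ, L (exp (t • B h)) - L (exp (t • A)) =
      ∫ s in (0:ℝ)..1,
        L (exp (s • (t • B h)) * (t • B h - t • A) * exp ((1 - s) • (t • A))) := by
    intro h
    set P : Matrix K K ℝ := t • B h with hP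
    set A' : Matrix K K ℝ := t • A with hA'
    have hΦ : ∀ s : ℝ, HasDerivAt (fun u : ℝ => L (exp (u • P) * exp ((1 - u) • A')))
        (L (exp (s • P) * (P - A') * exp ((1 - s) • A'))) s := by
      intro s
      have h1 : HasDerivAt (fun u : ℝ => exp (u • P)) (exp (s • P) * P) s :=
        hasDerivAt_exp_smul_const P s
      have h3 : HasDerivAt (fun u : ℝ => (1:ℝ) - u) (-1) s := by
        exact (hasDerivAt_id' s).const_sub (1:ℝ)
      have h4 : HasDerivAt (fun u : ℝ => exp ((1 - u) • A'))
          ((-1 : ℝ) • (A' * exp ((1 - s) • A'))) s := by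
        have h2 : HasDerivAt (fun u : ℝ => exp (u • A'))
            (A' * exp ((1 - s) • A')) (1 - s) := hasDerivAt_exp_smul_const' A' (1 - s)
        exact HasDerivAt.scomp (x := s) (h := fun u : ℝ => (1:ℝ) - u) h2 h3
      have h5 := h1.mul h4
      have h6 := (L.hasFDerivAt).comp_hasDerivAt s h5
      have heq : exp (s • P) * (P - A') * exp ((1 - s) • A')
          = exp (s • P) * P * exp ((1 - s) • A')
            + exp (s • P) * ((-1 : ℝ) • (A' * exp ((1 - s) • A'))) := by
        simp [mul_sub, sub_mul, mul_assoc, sub_eq_add_neg, add_mul, mul_add, mul_neg,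
          neg_mul]
      rw [heq]
      exact h6
    have hcont : Continuous
        (fun s : ℝ => L (exp (s • P) * (P - A') * exp ((1 - s) • A'))) := by
      apply L.continuous.comp
      exact ((hexpc.comp (continuous_id.smul continuous_const)).mul
        continuous_const).mul
        (hexpc.comp ((continuous_const.sub continuous_id).smul continuous_const))
    have hint := intervalIntegral.integral_eq_sub_of_hasDerivAt
      (f := fun u : ℝ => L (exp (u • P) * exp ((1 - u) • A')))
      (f' := fun s : ℝ => L (exp (s • P) * (P - A') * exp ((1 - s) • A')))
      (a := 0) (b := 1) (fun s _ => hΦ s) (hcont.intervalIntegrable 0 1)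
    rw [hint]
    simp [one_smul, zero_smul, exp_zero]
  -- scalar form of the observable
  have f_def : (fun h : ℝ => ∑ x, μ x * ∑ y, expL (pertW W V a b h) t x y * Q y)
      = fun h => L (exp (t • B h)) := by
    funext h
    rw [hLapp]
    simp only [expL, Finset.mul_sum, hB]
    congr 1; funext x; congr 1; funext y; ring
  -- slope identity
  have slope_id : ∀ h : ℝ, h ≠ 0 →
      L (exp (t • B h)) - L (exp (t • A)) = h * g h := by
    intro h hh
    rw [key h]
    have : ∀ s : ℝ, L (exp (s • (t • B h)) * (t • B h - t • A) * exp ((1 - s) • (t • A)))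
        = h * F h s := by
      intro s
      have h1 : t • B h - t • A = h • (t • D h) := by
        rw [smul_comm, hBD h, smul_sub]
      rw [h1]
      have h2 : exp (s • (t • B h)) * (h • (t • D h)) * exp ((1 - s) • (t • A))
          = h • (exp (s • (t • B h)) * (t • D h) * exp ((1 - s) • (t • A))) := by
        rw [mul_smul_comm, smul_mul_assoc]
      rw [h2, _root_.map_smul, smul_eq_mul]
    simp only [this]
    rw [intervalIntegral.integral_const_mul]
  -- value of g at 0
  have g0_eq : g 0 = ∫ s in (0:ℝ)..t, ∑ x, muE W μ s x * genL' W V a b (actE W (t - s) Q) x := by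
    set ρ : ℝ → ℝ := fun u => L (exp (u • A) * C * exp ((t - u) • A)) with hρ
    have hF0 : ∀ s : ℝ, F 0 s = t * ρ (t * s) := by
      intro s
      show L (exp (s • (t • B 0)) * (t • D 0) * exp ((1 - s) • (t • A))) = _
      rw [hB0, hD0]
      have e1 : s • (t • A) = (t * s) • A := by rw [smul_smul, mul_comm]
      have e2 : (1 - s) • (t • A) = (t - t * s) • A := by
        rw [smul_smul]
        congr 1
        ring
      rw [e1, e2]
      have e3 : exp ((t * s) • A) * (t • C) * exp ((t - t * s) • A)
          = t • (exp ((t * s) • A) * C * exp ((t - t * s) • A)) := by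
        rw [mul_smul_comm, smul_mul_assoc]
      rw [e3, _root_.map_smul, smul_eq_mul]
    have h1 : g 0 = ∫ s in (0:ℝ)..1, t * ρ (t * s) :=
      intervalIntegral.integral_congr (fun s _ => hF0 s)
    have h2 : (t : ℝ) • (∫ s in (0:ℝ)..1, ρ (t * s)) = ∫ u in (0:ℝ)..t, ρ u := by
      simpa using intervalIntegral.smul_integral_comp_mul_left (f := ρ) (a := 0) (b := 1) t
    rw [h1, intervalIntegral.integral_const_mul, ← smul_eq_mul, h2]
    refine intervalIntegral.integral_congr (fun u _ => ?_)
    -- pointwise identity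
    have hrow : ∀ (f : K → ℝ) (x : K), genL' W V a b f x = ∑ y, C x y * f y := by
      intro f x
      simp only [genL', hC]
      exact (genMatrix_row (fun x y => W x y * (b * V y - a * V x)) f x).symm
    have hXA : expL W u = exp (u • A) := by rw [expL, ← hA]
    have hZA : expL W (t - u) = exp ((t - u) • A) := by rw [expL, ← hA]
    show L (exp (u • A) * C * exp ((t - u) • A)) = _
    rw [hLapp]
    have hL : ∑ x, ∑ y, μ x * (exp (u • A) * C * exp ((t - u) • A)) x y * Q y
        = μ ⬝ᵥ ((exp (u • A) * C * exp ((t - u) • A)) *ᵥ Q) := by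
      simp [dotProduct, Matrix.mulVec, Finset.mul_sum, mul_assoc]
    have hR : ∑ x, muE W μ u x * genL' W V a b (actE W (t - u) Q) x
        = (μ ᵥ* exp (u • A)) ⬝ᵥ (C *ᵥ (exp ((t - u) • A) *ᵥ Q)) := by
      simp only [muE, actE, hXA, hZA]
      refine Finset.sum_congr rfl fun x _ => ?_
      rw [hrow]
      simp [actE, hZA, Matrix.vecMul, Matrix.mulVec, dotProduct]
    rw [hL, hR, ← Matrix.mulVec_mulVec, ← Matrix.mulVec_mulVec]
    exact dotProduct_mulVec _ _ _
  -- conclusion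
  rw [f_def, hasDerivAt_iff_tendsto_slope, ← g0_eq]
  have hev : ∀ᶠ h in nhdsWithin (0:ℝ) {(0:ℝ)}ᶜ,
      slope (fun h => L (exp (t • B h))) 0 h = g h := by
    filter_upwards [self_mem_nhdsWithin] with h hh
    simp only [Set.mem_compl_iff, Set.mem_singleton_iff] at hh
    rw [slope_def_field, sub_zero, hB0, slope_id h hh, mul_div_cancel_left₀ _ hh]
  refine Filter.Tendsto.congr' (Filter.EventuallyEq.symm hev) ?_
  exact (contg.continuousAt).tendsto.mono_left nhdsWithin_le_nhds
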